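/- For any subset A of ℝ, if ℝ \ A is countable and ℝ \ A is scattered as a subset of ℝ with the Euclidean topology, then H(A) is σ-compact. -/

import Mathlib

open Set TopologicalSpace Topology

/-- The Hattori topology τ(A) on ℝ: generated by the Euclidean open sets together with
all sets [x, x+ε) with x ∈ ℝ \ A and ε > 0. -/
def hattori (A : Set ℝ) : TopologicalSpace ℝ :=
  TopologicalSpace.generateFrom
    ({s : Set ℝ | IsOpen s} ∪ {s : Set ℝ | ∃ x ∉ A, ∃ ε > 0, s = Set.Ico x (x + ε)})

/-- A set `S` is scattered (w.r.t. a topology `t`) if every nonempty subset `T ⊆ S`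
has a point isolated in `T` with the subspace topology. -/
def ScatteredIn {X : Type*} (t : TopologicalSpace X) (S : Set X) : Prop :=
  ∀ T ⊆ S, T.Nonempty → ∃ x ∈ T, ∃ U, IsOpen[t] U ∧ U ∩ T = {x}

noncomputable section

/-- Derived set (limit points) of a set of reals, Euclidean topology. -/
def hDer (S : Set ℝ) : Set ℝ := {x | x ∈ closure (S \ {x})}

/-- Iterated Cantor–Bendixson derivative of `B`, stated so that it is
automatically antitone. -/
def CBseq (B : Set ℝ) : Ordinal.{0} → Set ℝ :=
  Ordinal.lt_wf.fix (fun o IH => B ∩ ⋂ (p : {o' // o' < o}), hDer (IH p.1 p.2))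

lemma mem_CBseq {B : Set ℝ} {o : Ordinal} {b : ℝ} :
    b ∈ CBseq B o ↔ b ∈ B ∧ ∀ o' < o, b ∈ hDer (CBseq B o') := by
  have h := Ordinal.lt_wf.fix_eq
    (fun o (IH : ∀ o' < o, Set ℝ) => B ∩ ⋂ (p : {o' // o' < o}), hDer (IH p.1 p.2)) o
  constructor
  · intro hb
    rw [show CBseq B o = _ from h] at hb
    refine ⟨hb.1, fun o' ho' => ?_⟩
    exact mem_iInter.1 hb.2 ⟨o', ho'⟩
  · intro hb
    rw [show CBseq B o = _ from h]
    exact ⟨hb.1, mem_iInter.2 fun p => hb.2 p.1 p.2⟩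

lemma CBseq_antitone {B : Set ℝ} {o₁ o₂ : Ordinal} (h : o₁ ≤ o₂) :
    CBseq B o₂ ⊆ CBseq B o₁ := fun b hb => by
  rw [mem_CBseq] at hb ⊢
  exact ⟨hb.1, fun o' ho' => hb.2 o' (lt_of_lt_of_le ho' h)⟩

lemma CBseq_subset {B : Set ℝ} {o : Ordinal} : CBseq B o ⊆ B := fun _ hb =>
  (mem_CBseq.1 hb).1


lemma CBseq_succ_ne {B : Set ℝ}
    (hscat : ScatteredIn (inferInstance : TopologicalSpace ℝ) B)
    {o : Ordinal} (hne : (CBseq B o).Nonempty) : CBseq B (o + 1) ≠ CBseq B o := by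
  obtain ⟨z, hz, U, hU, hUz⟩ := hscat (CBseq B o) CBseq_subset hne
  intro heq
  have hz1 : z ∈ CBseq B (o + 1) := heq ▸ hz
  have hder : z ∈ hDer (CBseq B o) := (mem_CBseq.1 hz1).2 o (lt_add_one o)
  obtain ⟨y, hyU, hy⟩ := mem_closure_iff.1 hder U hU (by
    have : z ∈ U ∩ CBseq B o := hUz ▸ rfl
    exact this.1)
  have : y ∈ U ∩ CBseq B o := ⟨hyU, hy.1⟩
  rw [hUz] at this
  exact hy.2 this

lemma CBseq_exists_empty {B : Set ℝ}
    (hscat : ScatteredIn (inferInstance : TopologicalSpace ℝ) B) :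
    ∃ o, CBseq B o = ∅ := by
  by_contra h
  push_neg at h
  have hinj : Function.Injective (CBseq B) := by
    have hstep : ∀ o : Ordinal, CBseq B (o + 1) ⊂ CBseq B o := fun o =>
      lt_of_le_of_ne (CBseq_antitone (le_of_lt (lt_add_one o))) (CBseq_succ_ne hscat (h o))
    intro o₁ o₂ heq
    by_contra hne
    rcases lt_or_gt_of_ne hne with hlt | hlt
    · have h1 := hstep o₁
      have h2 : CBseq B o₂ ⊆ CBseq B (o₁ + 1) := CBseq_antitone (Order.add_one_le_of_lt hlt)
      exact h1.not_subset (heq ▸ h2)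
    · have h1 := hstep o₂
      have h2 : CBseq B o₁ ⊆ CBseq B (o₂ + 1) := CBseq_antitone (Order.add_one_le_of_lt hlt)
      exact h1.not_subset (heq ▸ h2)
  have hsurj : Function.Surjective (Function.invFun (CBseq B)) :=
    Function.invFun_surjective hinj
  obtain ⟨s, hs⟩ := hsurj (Ordinal.lsub (fun s : Set ℝ => Function.invFun (CBseq B) s))
  exact absurd (hs ▸ Ordinal.lt_lsub (fun s : Set ℝ => Function.invFun (CBseq B) s) s) (lt_irrefl _)

/-- Every point of a scattered set has a rank and a separation radius. -/
lemma exists_rank {B : Set ℝ}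
    (hscat : ScatteredIn (inferInstance : TopologicalSpace ℝ) B) :
    ∀ b ∈ B, ∃ (o : Ordinal) (δ : ℝ), 0 < δ ∧ δ ≤ 1 ∧ b ∈ CBseq B o ∧
      ∀ c ∈ CBseq B o, c ≠ b → δ ≤ |c - b| := by
  intro b hb
  obtain ⟨o₀, ho₀⟩ := CBseq_exists_empty hscat
  have hne : {o : Ordinal | b ∉ CBseq B o}.Nonempty := ⟨o₀, by simp [ho₀]⟩
  set om := Ordinal.lt_wf.min _ hne with hom
  have hmem : b ∉ CBseq B om := Ordinal.lt_wf.min_mem _ hne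
  have hlow : ∀ o' < om, b ∈ CBseq B o' := fun o' ho' => by
    by_contra hc
    exact Ordinal.lt_wf.not_lt_min _ hc ho'
  rw [mem_CBseq] at hmem
  push_neg at hmem
  obtain ⟨o', ho', hder⟩ := hmem hb
  have hbo' : b ∈ CBseq B o' := hlow o' ho'
  rw [hDer, mem_setOf_eq, Metric.mem_closure_iff] at hder
  push_neg at hder
  obtain ⟨ε, hε, hsep⟩ := hder
  refine ⟨o', min ε 1, lt_min hε one_pos, min_le_right _ _, hbo', fun c hc hcb => ?_⟩
  have := hsep c ⟨hc, hcb⟩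
  calc min ε 1 ≤ ε := min_le_left _ _
    _ ≤ dist b c := this
    _ = |c - b| := by rw [Real.dist_eq, abs_sub_comm]

/-- The key radius function: positive on `B`, and for every `x` only finitely many
`b ∈ B` with `x < b < x + ρ b`. -/
lemma exists_rho {B : Set ℝ}
    (hscat : ScatteredIn (inferInstance : TopologicalSpace ℝ) B) :
    ∃ ρ : ℝ → ℝ, (∀ b ∈ B, 0 < ρ b ∧ ρ b ≤ 1) ∧
      ∀ x : ℝ, {b | b ∈ B ∧ x < b ∧ b < x + ρ b}.Finite := by
  have H := exists_rank hscat
  choose! rk ρ hρ0 hρ1 hmem hsep using H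
  refine ⟨ρ, fun b hb => ⟨hρ0 b hb, hρ1 b hb⟩, fun x => ?_⟩
  set V := {b | b ∈ B ∧ x < b ∧ b < x + ρ b} with hV
  -- key comparison
  have key : ∀ b ∈ V, ∀ c ∈ V, c ≠ b → rk b ≤ rk c → b < c ∧ x + 2 * (b - x) < c := by
    intro b hb c hc hcb hrk
    have hcB : c ∈ CBseq B (rk b) := CBseq_antitone hrk (hmem c hc.1)
    have hdist : ρ b ≤ |c - b| := hsep b hb.1 c hcB hcb
    have hbx : b - x < ρ b := by linarith [hb.2.2]
    have hblt : b < c := by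
      by_contra hle
      push_neg at hle
      have : |c - b| = b - c := by rw [abs_sub_comm, abs_of_nonneg (by linarith)]
      have hcx : x < c := hc.2.1
      rw [this] at hdist
      linarith
    have : |c - b| = c - b := abs_of_nonneg (by linarith)
    rw [this] at hdist
    exact ⟨hblt, by linarith⟩
  rcases eq_empty_or_nonempty V with hVe | hVne
  · rw [hVe]; exact finite_empty
  -- rank-minimal element
  obtain ⟨b₀, hb₀, hmin⟩ := (InvImage.wf rk Ordinal.lt_wf).has_min V hVne
  have hb₀x : (0:ℝ) < b₀ - x := by linarith [hb₀.2.1]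
  -- all elements of V are ≥ b₀ - x away from x
  have hall : ∀ c ∈ V, b₀ - x ≤ c - x := by
    intro c hc
    by_cases hcb : c = b₀
    · rw [hcb]
    · have hrk : rk b₀ ≤ rk c := not_lt.1 (fun h => hmin c hc h)
      have := key b₀ hb₀ c hc hcb hrk
      linarith [this.2]
  obtain ⟨n, hn⟩ := exists_pow_lt_of_lt_one hb₀x (by norm_num : (1:ℝ)/2 < 1)
  -- bands
  have hband : ∀ k : ℕ, {c | c ∈ V ∧ (1/2:ℝ)^(k+1) < c - x ∧ c - x ≤ (1/2:ℝ)^k}.Subsingleton := by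
    intro k b hbk c hck
    by_contra hne
    have hps : (1/2:ℝ)^(k+1) = (1/2)^k * (1/2) := pow_succ _ _
    rcases le_total (rk b) (rk c) with h | h
    · have hk := key b hbk.1 c hck.1 (Ne.symm hne) h
      linarith [hk.2, hbk.2.1, hck.2.2]
    · have hk := key c hck.1 b hbk.1 hne h
      linarith [hk.2, hck.2.1, hbk.2.2]
  have hcover : V ⊆ ⋃ k ∈ Finset.range (n+1),
      {c | c ∈ V ∧ (1/2:ℝ)^(k+1) < c - x ∧ c - x ≤ (1/2:ℝ)^k} := by
    intro c hc
    have hcx : (1/2:ℝ)^(n+1) < c - x := by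
      calc (1/2:ℝ)^(n+1) ≤ (1/2)^n := by
            apply pow_le_pow_of_le_one (by norm_num) (by norm_num) (Nat.le_succ n)
        _ < b₀ - x := hn
        _ ≤ c - x := hall c hc
    have hex : ∃ k : ℕ, (1/2:ℝ)^(k+1) < c - x := ⟨n, hcx⟩
    set k₀ := Nat.find hex with hk₀
    have hk₀n : k₀ ≤ n := Nat.find_le hcx
    have hub : c - x ≤ (1/2:ℝ)^k₀ := by
      rcases Nat.eq_zero_or_pos k₀ with h0 | hpos
      · rw [h0, pow_zero]
        have : c - x < ρ c := by linarith [hc.2.2]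
        linarith [(hρ1 c hc.1 : ρ c ≤ 1)]
      · obtain ⟨j, hj⟩ := Nat.exists_eq_succ_of_ne_zero (Nat.pos_iff_ne_zero.1 hpos)
        have := Nat.find_min hex (by omega : j < k₀)
        push_neg at this
        rw [hj]
        exact this
    exact mem_biUnion (Finset.mem_range.2 (by omega)) ⟨hc, Nat.find_spec hex, hub⟩
  exact Finite.subset (Set.Finite.biUnion (Finset.finite_toSet _)
    (fun k _ => Set.Subsingleton.finite (hband k))) hcover

lemma hattori_basic {A U : Set ℝ} (hU : IsOpen[hattori A] U) :
    ∀ x ∈ U, ∃ ε > 0, Ico x (x + ε) ⊆ U ∧ (x ∈ A → Ioo (x - ε) (x + ε) ⊆ U) := by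
  have hU' : TopologicalSpace.GenerateOpen
      ({s : Set ℝ | IsOpen s} ∪ {s : Set ℝ | ∃ x ∉ A, ∃ ε > 0, s = Set.Ico x (x + ε)}) U := hU
  clear hU
  induction hU' with
  | basic s hs =>
    rcases hs with hs | ⟨a, haA, ε₀, hε₀, rfl⟩
    · intro x hx
      obtain ⟨ε, hε, hball⟩ := Metric.isOpen_iff.1 (show IsOpen s from hs) x hx
      rw [Real.ball_eq_Ioo] at hball
      exact ⟨ε, hε, fun y hy => hball ⟨by linarith [hy.1], hy.2⟩, fun _ => hball⟩
    · intro x hx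
      rcases hx with ⟨hax, hxa⟩
      by_cases hxA : x ∈ A
      · have hxa' : a < x := lt_of_le_of_ne hax (by rintro rfl; exact haA hxA)
        refine ⟨min (a + ε₀ - x) (x - a), lt_min (by linarith) (by linarith), ?_, ?_⟩
        · intro y hy
          constructor
          · linarith [hy.1]
          · have := hy.2
            have h1 : min (a + ε₀ - x) (x - a) ≤ a + ε₀ - x := min_le_left _ _
            linarith
        · intro _ y hy
          have h1 : min (a + ε₀ - x) (x - a) ≤ a + ε₀ - x := min_le_left _ _
          have h2 : min (a + ε₀ - x) (x - a) ≤ x - a := min_le_right _ _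
          exact ⟨by linarith [hy.1], by linarith [hy.2]⟩
      · refine ⟨a + ε₀ - x, by linarith, ?_, fun h => absurd h hxA⟩
        intro y hy
        exact ⟨le_trans hax hy.1, by linarith [hy.2]⟩
  | univ => exact fun x _ => ⟨1, one_pos, subset_univ _, fun _ => subset_univ _⟩
  | inter s t _ _ ihs iht =>
    intro x hx
    obtain ⟨ε₁, hε₁, h1, h1'⟩ := ihs x hx.1
    obtain ⟨ε₂, hε₂, h2, h2'⟩ := iht x hx.2
    refine ⟨min ε₁ ε₂, lt_min hε₁ hε₂, ?_, ?_⟩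
    · intro y hy
      exact ⟨h1 ⟨hy.1, lt_of_lt_of_le hy.2 (by linarith [min_le_left ε₁ ε₂])⟩,
             h2 ⟨hy.1, lt_of_lt_of_le hy.2 (by linarith [min_le_right ε₁ ε₂])⟩⟩
    · intro hA y hy
      have l1 := min_le_left ε₁ ε₂
      have l2 := min_le_right ε₁ ε₂
      exact ⟨h1' hA ⟨by linarith [hy.1], by linarith [hy.2]⟩,
             h2' hA ⟨by linarith [hy.1], by linarith [hy.2]⟩⟩
  | sUnion S _ ih =>
    intro x hx
    obtain ⟨t, htS, hxt⟩ := hx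
    obtain ⟨ε, hε, h1, h2⟩ := ih t htS x hxt
    exact ⟨ε, hε, h1.trans (subset_sUnion_of_mem htS),
      fun hA => (h2 hA).trans (subset_sUnion_of_mem htS)⟩

/-- Euclidean compact + left gaps at all non-A points ⟹ Hattori compact. -/
lemma hattori_compact {A K : Set ℝ} (hK : IsCompact K)
    (hgap : ∀ b ∉ A, ∃ δ > 0, K ∩ Ioo (b - δ) b = ∅) :
    @IsCompact _ (hattori A) K := by
  classical
  refine @isCompact_of_finite_subcover ℝ (hattori A) K ?_
  intro ι U hUo hcov
  rcases K.eq_empty_or_nonempty with rfl | ⟨x₀, hx₀⟩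
  · exact ⟨∅, by simp⟩
  obtain ⟨i₀, _⟩ := mem_iUnion.1 (hcov hx₀)
  -- choose index and radius for each point of K
  have hsel : ∀ x : ℝ, ∃ i : ι, ∃ ε > 0, x ∈ K →
      Ico x (x + ε) ⊆ U i ∧ (x ∈ A → Ioo (x - ε) (x + ε) ⊆ U i) := by
    intro x
    by_cases hx : x ∈ K
    · obtain ⟨i, hi⟩ := mem_iUnion.1 (hcov hx)
      obtain ⟨ε, hε, h1, h2⟩ := hattori_basic (hUo i) x hi
      exact ⟨i, ε, hε, fun _ => ⟨h1, h2⟩⟩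
    · exact ⟨i₀, 1, one_pos, fun h => absurd h hx⟩
  choose! idx ε hε hful using hsel
  have hIco : ∀ x ∈ K, Ico x (x + ε x) ⊆ U (idx x) := fun x hx => (hful x hx).1
  have hIoo : ∀ x ∈ K, x ∈ A → Ioo (x - ε x) (x + ε x) ⊆ U (idx x) :=
    fun x hx => (hful x hx).2
  -- left gap for non-A points
  have hδ : ∀ x : ℝ, x ∉ A → ∃ δ > 0, K ∩ Ioo (x - δ) x = ∅ := hgap
  choose! δ hδ0 hδgap using hδ
  -- euclidean open neighborhoods
  let W : ℝ → Set ℝ := fun x =>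
    if x ∈ A then Ioo (x - ε x) (x + ε x) else Ioo (x - δ x) (x + ε x)
  have hWopen : ∀ x, IsOpen (W x) := by
    intro x; dsimp only [W]; split <;> exact isOpen_Ioo
  have hWmem : ∀ x ∈ K, x ∈ W x := by
    intro x hx; dsimp only [W]
    split
    · exact ⟨by linarith [hε x], by linarith [hε x]⟩
    · next h => exact ⟨by linarith [hδ0 x h], by linarith [hε x]⟩
  have hWsub : ∀ x ∈ K, K ∩ W x ⊆ U (idx x) := by
    intro x hx y hy
    by_cases hxA : x ∈ A
    · have : W x = Ioo (x - ε x) (x + ε x) := if_pos hxA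
      exact hIoo x hx hxA (this ▸ hy.2)
    · have hW : W x = Ioo (x - δ x) (x + ε x) := if_neg hxA
      rw [hW] at hy
      rcases le_or_gt x y with hxy | hxy
      · exact hIco x hx ⟨hxy, hy.2.2⟩
      · exfalso
        have : y ∈ K ∩ Ioo (x - δ x) x := ⟨hy.1, hy.2.1, hxy⟩
        rw [hδgap x hxA] at this
        exact this
  obtain ⟨t, ht⟩ := hK.elim_finite_subcover (fun x : K => W x)
    (fun x => hWopen x) (by intro y hy; rw [mem_iUnion]; exact ⟨⟨y, hy⟩, hWmem y hy⟩)
  refine ⟨t.image (fun x : K => idx x), ?_⟩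
  intro y hy
  obtain ⟨x, hxt, hyW⟩ := mem_iUnion₂.1 (ht hy)
  rw [mem_iUnion₂]
  exact ⟨idx x, Finset.mem_image.2 ⟨x, hxt, rfl⟩, hWsub x x.2 ⟨hy, hyW⟩⟩

/-- If ℝ \ A is countable and scattered in the Euclidean real line,
then H(A) is σ-compact. -/
theorem sigmaCompact_of_countable_scattered_in_euclidean (A : Set ℝ)
    (hcount : (Aᶜ).Countable)
    (hscat : ScatteredIn (inferInstance : TopologicalSpace ℝ) Aᶜ) :
    @SigmaCompactSpace ℝ (hattori A) := by
  classical
  obtain ⟨ρ, hρ, hfin⟩ := exists_rho hscat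
  -- enumeration of Aᶜ
  obtain ⟨g, hg⟩ : ∃ g : ℕ → ℝ, Aᶜ ⊆ range g := by
    obtain ⟨g, hg⟩ := Set.Countable.exists_eq_range
      (hcount.union (Set.countable_singleton 0)) ⟨0, Or.inr rfl⟩
    exact ⟨g, fun b hb => hg ▸ Or.inl hb⟩
  -- the compact pieces
  let r : Finset ℕ → ℕ → ℝ → ℝ := fun s k b =>
    if b ∈ g '' (s : Set ℕ) then ρ b / 2 ^ k else ρ b
  let Kset : ℕ → Finset ℕ → ℕ → Set ℝ := fun m s k =>
    Icc (-(m:ℝ)) m ∩ (⋃ b ∈ Aᶜ, Ioo (b - r s k b) b)ᶜ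
  have hrpos : ∀ s k b, b ∈ Aᶜ → 0 < r s k b := by
    intro s k b hb
    have := (hρ b hb).1
    dsimp only [r]; split
    · positivity
    · exact this
  have hrle : ∀ s k b, b ∈ Aᶜ → r s k b ≤ ρ b := by
    intro s k b hb
    have h0 := (hρ b hb).1
    dsimp only [r]; split
    · exact div_le_self (le_of_lt h0) (one_le_pow₀ (by norm_num : (1:ℝ) ≤ 2))
    · exact le_rfl
  have hKcomp : ∀ m s k, IsCompact (Kset m s k) := by
    intro m s k
    have hcl : IsClosed (Kset m s k) :=
      isClosed_Icc.inter (isOpen_biUnion fun b _ => isOpen_Ioo).isClosed_compl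
    exact isCompact_Icc.of_isClosed_subset hcl inter_subset_left
  have hKgap : ∀ m s k, ∀ b ∉ A, ∃ δ > 0, Kset m s k ∩ Ioo (b - δ) b = ∅ := by
    intro m s k b hb
    refine ⟨r s k b, hrpos s k b hb, ?_⟩
    apply eq_empty_iff_forall_notMem.2
    rintro y ⟨hy1, hy2⟩
    exact hy1.2 (mem_biUnion hb hy2)
  have hHcomp : ∀ m s k, @IsCompact _ (hattori A) (Kset m s k) := fun m s k =>
    hattori_compact (hKcomp m s k) (hKgap m s k)
  -- covering
  have hcover : ∀ x : ℝ, ∃ m s k, x ∈ Kset m s k := by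
    intro x
    set F := {b | b ∈ Aᶜ ∧ x < b ∧ b < x + ρ b} with hF
    have hFfin : F.Finite := hfin x
    -- finset of indices
    let φ : ℝ → ℕ := fun b => if h : b ∈ range g then h.choose else 0
    have hφ : ∀ b ∈ Aᶜ, g (φ b) = b := by
      intro b hb
      have h : b ∈ range g := hg hb
      simp only [φ, dif_pos h]
      exact h.choose_spec
    let s : Finset ℕ := hFfin.toFinset.image φ
    have hFs : ∀ b ∈ F, b ∈ g '' (s : Set ℕ) := by
      intro b hb
      exact ⟨φ b, by simp [s, Set.Finite.mem_toFinset]; exact ⟨b, hb, rfl⟩, hφ b hb.1⟩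
    -- choose k
    have hk : ∃ k : ℕ, ∀ b ∈ F, ρ b / 2 ^ k ≤ b - x := by
      rcases F.eq_empty_or_nonempty with hFe | hFne
      · exact ⟨0, fun b hb => by rw [hFe] at hb; exact absurd hb (notMem_empty b)⟩
      · have htne : hFfin.toFinset.Nonempty := by
          rwa [Set.Finite.toFinset_nonempty]
        obtain ⟨b₁, hb₁t, hb₁min⟩ := hFfin.toFinset.exists_min_image (fun b => b - x) htne
        have hb₁F : b₁ ∈ F := (Set.Finite.mem_toFinset hFfin).1 hb₁t
        have hm₀ : (0:ℝ) < b₁ - x := by linarith [hb₁F.2.1]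
        obtain ⟨k, hk⟩ := exists_pow_lt_of_lt_one hm₀ (by norm_num : (1:ℝ)/2 < 1)
        refine ⟨k, fun b hb => ?_⟩
        have h1 : ρ b ≤ 1 := (hρ b hb.1).2
        have h2 : (0:ℝ) < 2 ^ k := by positivity
        have h3 : ρ b / 2 ^ k ≤ 1 / 2 ^ k := by gcongr
        have h4 : (1:ℝ) / 2 ^ k = (1/2:ℝ) ^ k := by rw [one_div_pow]
        have h5 := hb₁min b ((Set.Finite.mem_toFinset hFfin).2 hb)
        linarith
    obtain ⟨k, hkle⟩ := hk
    refine ⟨⌈|x|⌉₊, s, k, ⟨?_, ?_⟩, ?_⟩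
    · have := Nat.le_ceil |x|
      have := abs_le.1 (le_trans (le_refl |x|) (Nat.le_ceil |x|))
      linarith [this.1]
    · have := abs_le.1 (Nat.le_ceil |x|)
      linarith [this.2]
    · intro hx
      obtain ⟨b, hb, hxb⟩ := mem_iUnion₂.1 hx
      have hxb1 : b - r s k b < x := hxb.1
      have hxb2 : x < b := hxb.2
      by_cases hbF : b ∈ F
      · have : r s k b = ρ b / 2 ^ k := if_pos (hFs b hbF)
        rw [this] at hxb1
        linarith [hkle b hbF]
      · have hnb : ¬(x < b ∧ b < x + ρ b) := fun h => hbF ⟨hb, h⟩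
        push_neg at hnb
        have : x + ρ b ≤ b := hnb hxb2
        linarith [hrle s k b hb]
  refine @SigmaCompactSpace.mk ℝ (hattori A) ?_
  haveI : Denumerable (Finset ℕ) := Denumerable.ofEncodableOfInfinite _
  let e := Denumerable.eqv (ℕ × Finset ℕ × ℕ)
  refine ⟨fun n => Kset (e.symm n).1 (e.symm n).2.1 (e.symm n).2.2, fun n => hHcomp _ _ _, ?_⟩
  ext x
  simp only [mem_iUnion, mem_univ, iff_true]
  obtain ⟨m, s, k, hx⟩ := hcover x
  exact ⟨e (m, s, k), by rwa [Equiv.symm_apply_apply]⟩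

end
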